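/- Let n ≥ 1, let H : EuclideanSpace ℝ (Fin n) × EuclideanSpace ℝ (Fin n) × ℝ → ℝ be a Hamiltonian, and suppose S_J : EuclideanSpace ℝ (Fin n) × ℝ → ℝ is continuously differentiable and satisfies the Hamilton–Jacobi equation ∂S_J/∂t (q,t) + H(q, ∇_q S_J(q,t), t) = 0 for all (q,t). Then the function S_H(q,t;q₀,t₀) := S_J(q,t) − S_J(q₀,t₀) simultaneously satisfies Hamilton's coupled pair of partial differential equations: ∂S_H/∂t (q,t;q₀,t₀) = −H(q, ∇_q S_H(q,t;q₀,t₀), t) and ∂S_H/∂t₀ (q,t;q₀,t₀) = H(q₀, −∇_{q₀} S_H(q,t;q₀,t₀), t₀), for all (q,t,q₀,t₀). -/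

import Mathlib

section Aux

variable {F : Type*} [NormedAddCommGroup F] [InnerProductSpace ℝ F] [CompleteSpace F]

lemma gradient_sub_const' {f : F → ℝ} {x : F} (hf : DifferentiableAt ℝ f x) (c : ℝ) :
    gradient (fun y => f y - c) x = gradient f x := by
  refine HasGradientAt.gradient ?_
  rw [hasGradientAt_iff_hasFDerivAt]
  exact (hasGradientAt_iff_hasFDerivAt.mp hf.hasGradientAt).sub_const c

lemma gradient_const_sub' {f : F → ℝ} {x : F} (hf : DifferentiableAt ℝ f x) (c : ℝ) :
    gradient (fun y => c - f y) x = -gradient f x := by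
  refine HasGradientAt.gradient ?_
  rw [hasGradientAt_iff_hasFDerivAt]
  have h := (hasGradientAt_iff_hasFDerivAt.mp hf.hasGradientAt).const_sub c
  simpa using h

end Aux

/-- Hamilton's principal function `S_H(q,t;q₀,t₀) := S_J(q,t) − S_J(q₀,t₀)`, built from a
C¹ solution `S_J` of the Hamilton–Jacobi equation, simultaneously satisfies Hamilton's
coupled pair of partial differential equations. -/
theorem hamilton_principal_function_satisfies_coupled_PDEs
    (n : ℕ) (hn : 1 ≤ n)
    (H : EuclideanSpace ℝ (Fin n) × EuclideanSpace ℝ (Fin n) × ℝ → ℝ)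
    (S_J : EuclideanSpace ℝ (Fin n) × ℝ → ℝ)
    (hS_J : ContDiff ℝ 1 S_J)
    (hHJE : ∀ (q : EuclideanSpace ℝ (Fin n)) (t : ℝ),
      deriv (fun τ => S_J (q, τ)) t + H (q, gradient (fun x => S_J (x, t)) q, t) = 0)
    (S_H : EuclideanSpace ℝ (Fin n) → ℝ → EuclideanSpace ℝ (Fin n) → ℝ → ℝ)
    (hS_H : ∀ q t q₀ t₀, S_H q t q₀ t₀ = S_J (q, t) - S_J (q₀, t₀)) :
    (∀ (q : EuclideanSpace ℝ (Fin n)) (t : ℝ) (q₀ : EuclideanSpace ℝ (Fin n)) (t₀ : ℝ),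
        deriv (fun τ => S_H q τ q₀ t₀) t
          = -H (q, gradient (fun x => S_H x t q₀ t₀) q, t)) ∧
    (∀ (q : EuclideanSpace ℝ (Fin n)) (t : ℝ) (q₀ : EuclideanSpace ℝ (Fin n)) (t₀ : ℝ),
        deriv (fun τ₀ => S_H q t q₀ τ₀) t₀
          = H (q₀, -gradient (fun x₀ => S_H q t x₀ t₀) q₀, t₀)) := by
  have hd := hS_J.differentiable one_ne_zero
  have hq : ∀ t, Differentiable ℝ (fun x : EuclideanSpace ℝ (Fin n) => S_J (x, t)) :=
    fun t => hd.comp (differentiable_id.prodMk (differentiable_const t))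
  have ht : ∀ q : EuclideanSpace ℝ (Fin n), Differentiable ℝ (fun τ => S_J (q, τ)) :=
    fun q => hd.comp ((differentiable_const q).prodMk differentiable_id)
  constructor
  · intro q t q₀ t₀
    simp only [hS_H]
    rw [deriv_sub_const, gradient_sub_const' ((hq t) q)]
    have := hHJE q t
    linarith
  · intro q t q₀ t₀
    simp only [hS_H]
    rw [deriv_const_sub, gradient_const_sub' ((hq t₀) q₀), neg_neg]
    have := hHJE q₀ t₀
    linarith
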